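/- Define ψ₁(x) := 2·∫₀ˣ e^{t²} (∫₀ᵗ e^{-u²} du) dt. Then ψ₁ is an even function and admits the Maclaurin series ψ₁(x) = Σ_{n=0}^∞ 2ⁿ · x^{2n+2} / ((2n+1)!! · (n+1)) for all real x. -/

import Mathlib

open Real intervalIntegral

noncomputable def psi1 (x : ℝ) : ℝ :=
  2 * ∫ t in (0 : ℝ)..x, Real.exp (t ^ 2) * ∫ u in (0 : ℝ)..t, Real.exp (-u ^ 2)

open Real intervalIntegral Finset
open scoped Nat

lemma df_odd (m : ℕ) : ((2*m+1)‼ : ℝ) = (2*m+1) * (2*m-1)‼ := by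
  rw [Nat.doubleFactorial_add_one]; push_cast; ring

noncomputable def Sc (n m : ℕ) : ℝ :=
  ∑ k ∈ range (n+1), (-1:ℝ)^k * (n.choose k) / (2*k+2*m+1)

lemma Sc_rec (n m : ℕ) : Sc (n+1) m = Sc n m - Sc n (m+1) := by
  set f : ℕ → ℝ := fun k => (-1:ℝ)^k * ((n+1).choose k) / (2*k+2*m+1) with hf
  set a : ℕ → ℝ := fun k => (-1:ℝ)^k * (n.choose k) / (2*k+2*m+1) with ha
  set A : ℕ → ℝ := fun k => (-1:ℝ)^(k+1) * (n.choose (k+1)) / (2*(k+1)+2*m+1) with hA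
  set B : ℕ → ℝ := fun k => -((-1:ℝ)^k * (n.choose k) / (2*k+2*(m+1)+1)) with hB
  have h1 : Sc (n+1) m = (∑ k ∈ range (n+1), f (k+1)) + f 0 := by
    rw [Sc, Finset.sum_range_succ' f (n+1)]
  have h2 : ∀ k ∈ range (n+1), f (k+1) = A k + B k := by
    intro k _
    simp only [hf, hA, hB, Nat.choose_succ_succ]
    push_cast
    ring
  have h3 : ∑ k ∈ range (n+1), A k = ∑ k ∈ range n, A k := by
    rw [Finset.sum_range_succ]
    simp [hA, Nat.choose_succ_self]
  have h4 : ∑ k ∈ range (n+1), a k = (∑ k ∈ range n, a (k+1)) + a 0 := by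
    rw [Finset.sum_range_succ' a n]
  have h5 : ∀ k, a (k+1) = A k := by
    intro k; simp only [ha, hA]; push_cast; ring
  have h6 : ∑ k ∈ range (n+1), B k = - Sc n (m+1) := by
    rw [Sc, ← Finset.sum_neg_distrib]
    apply Finset.sum_congr rfl
    intro k _
    simp only [hB]
    push_cast
    ring
  have h7 : f 0 = a 0 := by simp [hf, ha]
  rw [h1, Finset.sum_congr rfl h2, Finset.sum_add_distrib, h3, h6]
  have : Sc n m = (∑ k ∈ range n, A k) + a 0 := by
    rw [Sc, ← ha, h4]; simp_rw [h5]
  rw [this, h7]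
  ring

lemma Sc_eq (n : ℕ) : ∀ m : ℕ,
    Sc n m = (n ! : ℝ) * ((2*m-1)‼ : ℕ) * 2^n / ((2*(n+m)+1)‼ : ℕ) := by
  induction n with
  | zero =>
    intro m
    have h := df_odd m
    have h1 : ((2*m-1)‼ : ℝ) ≠ 0 := by positivity
    have h2 : (2*(m:ℝ)+1) ≠ 0 := by positivity
    simp only [Sc, range_one, sum_singleton, pow_zero, Nat.choose_self, Nat.cast_one,
      Nat.factorial_zero, zero_add, Nat.zero_add, Nat.cast_zero, mul_zero, one_mul]
    rw [h]
    field_simp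
  | succ n ih =>
    intro m
    have ihm := ih (m+1)
    rw [Sc_rec, ih m, ihm]
    have hd1 : ((2*(n+(m+1))+1)‼ : ℝ) = (2*(n+m)+3) * ((2*(n+m)+1)‼ : ℕ) := by
      have : 2*(n+(m+1))+1 = (2*(n+m)+1)+2 := by ring
      rw [this, Nat.doubleFactorial_add_two]; push_cast; ring
    have hd2 : ((2*(m+1)-1)‼ : ℝ) = (2*m+1) * ((2*m-1)‼ : ℕ) := by
      have : 2*(m+1)-1 = 2*m+1 := by omega
      rw [this, df_odd]
    have hd3 : ((2*(n+1+m)+1)‼ : ℝ) = (2*(n+m)+3) * ((2*(n+m)+1)‼ : ℕ) := by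
      have : 2*(n+1+m)+1 = (2*(n+m)+1)+2 := by ring
      rw [this, Nat.doubleFactorial_add_two]; push_cast; ring
    rw [hd1, hd2, hd3, Nat.factorial_succ]
    have p1 : ((2*(n+m)+1)‼ : ℝ) ≠ 0 := by positivity
    have p2 : (2*(n:ℝ)+2*m+3) ≠ 0 := by positivity
    field_simp
    push_cast
    ring

lemma abs_le_of_mem_uIcc {u t : ℝ} (h : u ∈ Set.uIcc 0 t) : |u| ≤ |t| := by
  rcases Set.mem_uIcc.mp h with ⟨h1, h2⟩ | ⟨h1, h2⟩ <;> rw [abs_le] <;>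
    constructor <;> nlinarith [le_abs_self t, neg_abs_le t]

lemma hasSum_inner (t : ℝ) :
    HasSum (fun n : ℕ => (-1:ℝ)^n * t^(2*n+1) / (n ! * (2*n+1)))
      (∫ u in (0:ℝ)..t, Real.exp (-u^2)) := by
  set F : ℕ → C(ℝ, ℝ) := fun n => ⟨fun u => (-1:ℝ)^n * u^(2*n) / n !, by fun_prop⟩ with hF
  have hsum : Summable fun n : ℕ =>
      ‖(F n).restrict (⟨Set.uIcc 0 t, isCompact_uIcc⟩ : TopologicalSpace.Compacts ℝ)‖ := by
    apply Summable.of_nonneg_of_le (fun n => norm_nonneg _)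
      (fun n => ?_) (Real.summable_pow_div_factorial (t^2))
    rw [ContinuousMap.norm_le _ (by positivity)]
    rintro ⟨u, hu⟩
    have h1 : |u| ≤ |t| := abs_le_of_mem_uIcc hu
    have h2 : |u|^(2*n) ≤ |t|^(2*n) := pow_le_pow_left₀ (abs_nonneg u) h1 _
    have h3 : (t^2)^n = |t|^(2*n) := by
      rw [pow_mul, sq_abs]
    simp only [ContinuousMap.restrict_apply, ContinuousMap.coe_mk, hF]
    rw [Real.norm_eq_abs, abs_div, abs_mul, abs_pow, abs_pow, abs_neg, abs_one, one_pow,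
      one_mul, Nat.abs_cast, h3]
    gcongr
  have key := hasSum_intervalIntegral_of_summable_norm (a := 0) (b := t) hsum
  have htsum : ∀ u : ℝ, ∑' n : ℕ, F n u = Real.exp (-u^2) := by
    intro u
    have h : HasSum (fun n : ℕ => (-u^2)^n / n !) (Real.exp (-u^2)) := by
      rw [Real.exp_eq_exp_ℝ]; exact NormedSpace.expSeries_div_hasSum_exp _
    have h2 : (fun n : ℕ => (-u^2)^n / n !) = fun n : ℕ => F n u := by
      funext n
      simp only [hF, ContinuousMap.coe_mk]
      rw [neg_pow, pow_mul]
    rw [← h2] at *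
    exact h.tsum_eq
  have hint : ∀ n : ℕ, (∫ u in (0:ℝ)..t, F n u) = (-1:ℝ)^n * t^(2*n+1) / (n ! * (2*n+1)) := by
    intro n
    have e1 : (∫ u in (0:ℝ)..t, F n u) = ((-1:ℝ)^n / n !) * ∫ u in (0:ℝ)..t, u^(2*n) := by
      rw [← intervalIntegral.integral_const_mul]
      apply intervalIntegral.integral_congr
      intro u _
      simp only [hF, ContinuousMap.coe_mk]
      ring
    rw [e1, integral_pow, zero_pow (by omega), sub_zero]
    have h1 : (n ! : ℝ) ≠ 0 := by positivity
    have h2 : (2*(n:ℝ)+1) ≠ 0 := by positivity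
    push_cast
    field_simp
  have hval : (∫ u in (0:ℝ)..t, ∑' n : ℕ, F n u) = ∫ u in (0:ℝ)..t, Real.exp (-u^2) :=
    intervalIntegral.integral_congr (fun u _ => htsum u)
  have hfun : (fun n : ℕ => (-1:ℝ)^n * t^(2*n+1) / (n ! * (2*n+1)))
      = fun n : ℕ => ∫ u in (0:ℝ)..t, F n u := funext fun n => (hint n).symm
  rw [hfun, ← hval]
  exact key


lemma coeff_sum (n : ℕ) :
    ∑ j ∈ range (n+1), (-1:ℝ)^j / (j ! * (n-j)! * (2*j+1)) = 2^n / ((2*n+1)‼ : ℕ) := by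
  have h := Sc_eq n 0
  have e : ∑ j ∈ range (n+1), (-1:ℝ)^j / (j ! * (n-j)! * (2*j+1)) = (1/(n ! : ℝ)) * Sc n 0 := by
    rw [Sc, Finset.mul_sum]
    apply Finset.sum_congr rfl
    intro j hj
    have hj' : j ≤ n := Nat.lt_succ_iff.mp (Finset.mem_range.mp hj)
    rw [Nat.cast_choose ℝ hj']
    have h1 : (j ! : ℝ) ≠ 0 := by positivity
    have h2 : ((n-j)! : ℝ) ≠ 0 := by positivity
    have h3 : (n ! : ℝ) ≠ 0 := by positivity
    have h4 : (2*(j:ℝ)+1) ≠ 0 := by positivity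
    push_cast
    field_simp
    ring
  rw [e, h]
  have h3 : (n ! : ℝ) ≠ 0 := by positivity
  norm_num
  field_simp

lemma hasSum_h (t : ℝ) :
    HasSum (fun n : ℕ => (2:ℝ)^n * t^(2*n+1) / ((2*n+1)‼ : ℕ))
      (Real.exp (t^2) * ∫ u in (0:ℝ)..t, Real.exp (-u^2)) := by
  set f : ℕ → ℝ := fun k => t^(2*k) / k ! with hfdef
  set g : ℕ → ℝ := fun n => (-1:ℝ)^n * t^(2*n+1) / (n ! * (2*n+1)) with hgdef
  have hf : HasSum f (Real.exp (t^2)) := by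
    have h : HasSum (fun n : ℕ => (t^2)^n / n !) (Real.exp (t^2)) := by
      rw [Real.exp_eq_exp_ℝ]; exact NormedSpace.expSeries_div_hasSum_exp _
    have : (fun n : ℕ => (t^2)^n / n !) = f := by
      funext n; simp only [hfdef]; rw [pow_mul]
    rwa [this] at h
  have hg : HasSum g (∫ u in (0:ℝ)..t, Real.exp (-u^2)) := hasSum_inner t
  have hfn : Summable fun n => ‖f n‖ := by
    apply Summable.of_nonneg_of_le (fun n => norm_nonneg _) (fun n => ?_)
      (Real.summable_pow_div_factorial (t^2))
    simp only [hfdef, Real.norm_eq_abs, abs_div, abs_pow, Nat.abs_cast]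
    rw [pow_mul, sq_abs]
  have hgn : Summable fun n => ‖g n‖ := by
    apply Summable.of_nonneg_of_le (fun n => norm_nonneg _) (fun n => ?_)
      ((Real.summable_pow_div_factorial (t^2)).mul_right |t|)
    have h1 : ‖g n‖ = (t^2)^n * |t| / ((n ! : ℝ) * (2*n+1)) := by
      simp only [hgdef, Real.norm_eq_abs, abs_div, abs_mul, abs_pow, abs_neg, abs_one, one_pow,
        one_mul, Nat.abs_cast]
      rw [pow_succ, pow_mul, sq_abs, abs_of_pos (show (0:ℝ) < 2*n+1 by positivity)]
    rw [h1, div_mul_eq_mul_div]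
    gcongr
    nlinarith [Nat.cast_pos (α := ℝ) |>.mpr n.factorial_pos, Nat.cast_nonneg (α := ℝ) n]
  have key := hasSum_sum_range_mul_of_summable_norm hfn hgn
  rw [hf.tsum_eq, hg.tsum_eq] at key
  have term : ∀ n : ℕ, ∑ k ∈ range (n+1), f k * g (n-k)
      = (2:ℝ)^n * t^(2*n+1) / ((2*n+1)‼ : ℕ) := by
    intro n
    rw [← Finset.sum_range_reflect]
    have e1 : ∀ j ∈ range (n+1), f (n+1-1-j) * g (n-(n+1-1-j))
        = t^(2*n+1) * ((-1:ℝ)^j / (j ! * (n-j)! * (2*j+1))) := by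
      intro j hj
      have hj' : j ≤ n := Nat.lt_succ_iff.mp (Finset.mem_range.mp hj)
      have e2 : n+1-1-j = n-j := by omega
      have e3 : n-(n-j) = j := by omega
      rw [e2, e3]
      simp only [hfdef, hgdef]
      rw [show 2*n+1 = 2*(n-j) + (2*j+1) from by omega, pow_add]
      have h1 : (j ! : ℝ) ≠ 0 := by positivity
      have h2 : ((n-j)! : ℝ) ≠ 0 := by positivity
      have h4 : (2*(j:ℝ)+1) ≠ 0 := by positivity
      field_simp
      ring
    rw [Finset.sum_congr rfl e1, ← Finset.mul_sum, coeff_sum]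
    ring
  have : (fun n : ℕ => (2:ℝ)^n * t^(2*n+1) / ((2*n+1)‼ : ℕ))
      = fun n => ∑ k ∈ range (n+1), f k * g (n-k) := funext fun n => (term n).symm
  rw [this]
  exact key


lemma main_hasSum (x : ℝ) :
    HasSum (fun n : ℕ =>
        (2 : ℝ) ^ n * x ^ (2 * n + 2) / ((Nat.doubleFactorial (2 * n + 1) : ℝ) * (n + 1)))
      (psi1 x) := by
  set F : ℕ → C(ℝ, ℝ) :=
    fun n => ⟨fun t => (2:ℝ)^n * t^(2*n+1) / ((2*n+1)‼ : ℕ), by fun_prop⟩ with hF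
  have hsum : Summable fun n : ℕ =>
      ‖(F n).restrict (⟨Set.uIcc 0 x, isCompact_uIcc⟩ : TopologicalSpace.Compacts ℝ)‖ := by
    apply Summable.of_nonneg_of_le (fun n => norm_nonneg _) (fun n => ?_)
      (hasSum_h |x|).summable
    rw [ContinuousMap.norm_le _ (by positivity)]
    rintro ⟨u, hu⟩
    have h1 : |u| ≤ |x| := abs_le_of_mem_uIcc hu
    simp only [hF, ContinuousMap.restrict_apply, ContinuousMap.coe_mk]
    rw [Real.norm_eq_abs, abs_div, abs_mul, abs_pow, abs_pow, Nat.abs_cast]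
    rw [abs_of_nonneg (show (0:ℝ) ≤ 2 by norm_num)]
    gcongr
  have key := hasSum_intervalIntegral_of_summable_norm (a := 0) (b := x) hsum
  have htsum : ∀ t : ℝ, ∑' n : ℕ, F n t
      = Real.exp (t^2) * ∫ u in (0:ℝ)..t, Real.exp (-u^2) := by
    intro t
    have h := hasSum_h t
    have : (fun n : ℕ => (2:ℝ)^n * t^(2*n+1) / ((2*n+1)‼ : ℕ)) = fun n => F n t := by
      funext n; simp [hF]
    rw [this] at h
    exact h.tsum_eq
  have hval : (∫ t in (0:ℝ)..x, ∑' n : ℕ, F n t)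
      = ∫ t in (0:ℝ)..x, Real.exp (t^2) * ∫ u in (0:ℝ)..t, Real.exp (-u^2) :=
    intervalIntegral.integral_congr (fun t _ => htsum t)
  rw [hval] at key
  have key2 := key.mul_left 2
  have hpsi : psi1 x
      = 2 * ∫ t in (0:ℝ)..x, Real.exp (t^2) * ∫ u in (0:ℝ)..t, Real.exp (-u^2) := by
    rfl
  rw [← hpsi] at key2
  have hint : ∀ n : ℕ, 2 * (∫ t in (0:ℝ)..x, F n t)
      = (2 : ℝ) ^ n * x ^ (2 * n + 2) / ((Nat.doubleFactorial (2 * n + 1) : ℝ) * (n + 1)) := by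
    intro n
    have e1 : (∫ t in (0:ℝ)..x, F n t)
        = ((2:ℝ)^n / ((2*n+1)‼ : ℕ)) * ∫ t in (0:ℝ)..x, t^(2*n+1) := by
      rw [← intervalIntegral.integral_const_mul]
      apply intervalIntegral.integral_congr
      intro t _
      simp only [hF, ContinuousMap.coe_mk]
      ring
    rw [e1, integral_pow, zero_pow (by omega)]
    have h1 : (((2*n+1)‼ : ℕ) : ℝ) ≠ 0 := by positivity
    have h2 : ((2*(n:ℝ)+1)+1) ≠ 0 := by positivity
    have h3 : ((n:ℝ)+1) ≠ 0 := by positivity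
    push_cast
    field_simp
    ring
  have : (fun n : ℕ =>
      (2 : ℝ) ^ n * x ^ (2 * n + 2) / ((Nat.doubleFactorial (2 * n + 1) : ℝ) * (n + 1)))
      = fun n : ℕ => 2 * (∫ t in (0:ℝ)..x, F n t) := funext fun n => (hint n).symm
  rw [this]
  exact key2

theorem psi1_even_and_series (x : ℝ) :
    psi1 (-x) = psi1 x ∧
    HasSum (fun n : ℕ =>
        (2 : ℝ) ^ n * x ^ (2 * n + 2) / ((Nat.doubleFactorial (2 * n + 1) : ℝ) * (n + 1)))
      (psi1 x) := by
  refine ⟨?_, main_hasSum x⟩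
  have h1 := main_hasSum x
  have h2 := main_hasSum (-x)
  have e : (fun n : ℕ =>
      (2 : ℝ) ^ n * (-x) ^ (2 * n + 2) / ((Nat.doubleFactorial (2 * n + 1) : ℝ) * (n + 1)))
      = fun n : ℕ =>
      (2 : ℝ) ^ n * x ^ (2 * n + 2) / ((Nat.doubleFactorial (2 * n + 1) : ℝ) * (n + 1)) := by
    funext n
    rw [Even.neg_pow ⟨n+1, by ring⟩]
  rw [e] at h2
  exact h2.unique h1
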